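/- Let G be the root gadget and let C be the class of rooted pseudo networks that are tree-child. Then G is C_A-root-forcing; that is, there is no C_A-orientation of G whose root subdivides the edge {r,v} incident with the connector leaf r. -/

import Mathlib

/-!
Common definitions: rooted (pseudo/phylogenetic) networks represented as arc
relations `D : V → V → Prop` on a vertex type `V`, with in/out-degrees measured
by `Set.ncard`, together with the orientation notions (Variant A, Variant B,
orientations of connector networks) from the paper.
-/

section Prelude

universe u
variable {V : Type u}

/-- In-degree of `v` in the digraph with arc relation `D`. -/
noncomputable def inDeg (D : V → V → Prop) (v : V) : ℕ := Set.ncard {u | D u v}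

/-- Out-degree of `v` in the digraph with arc relation `D`. -/
noncomputable def outDeg (D : V → V → Prop) (v : V) : ℕ := Set.ncard {u | D v u}

/-- A digraph is acyclic if it has no directed cycle. -/
def Acyclic (D : V → V → Prop) : Prop := ∀ v, ¬ Relation.TransGen D v v

/-- A tree vertex: in-degree 1 and out-degree at least 1. -/
def IsTreeVertex (D : V → V → Prop) (v : V) : Prop := inDeg D v = 1 ∧ 1 ≤ outDeg D v

/-- A leaf (sink) of a digraph. -/
def IsLeafVertex (D : V → V → Prop) (v : V) : Prop := outDeg D v = 0

/-- Tree-child: every non-leaf vertex has a child that is a tree vertex or a leaf. -/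
def TreeChild (D : V → V → Prop) : Prop :=
  ∀ v, ¬ IsLeafVertex D v → ∃ u, D v u ∧ (IsTreeVertex D u ∨ IsLeafVertex D u)

/-- Funneled: every reticulation (in-degree at least 2) has out-degree 1. -/
def Funneled (D : V → V → Prop) : Prop := ∀ v, 2 ≤ inDeg D v → outDeg D v = 1

/-- An arc `(a,b)` is a shortcut if there is another directed path from `a` to `b`. -/
def IsShortcut (D : V → V → Prop) (a b : V) : Prop :=
  D a b ∧ ∃ c, D a c ∧ Relation.TransGen D c b

/-- Normal: tree-child and without shortcuts. -/
def NormalNet (D : V → V → Prop) : Prop := TreeChild D ∧ ∀ a b, ¬ IsShortcut D a b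

/-- `D` is a rooted pseudo network with root `ρ` whose set of leaves is `X`
(leaves are labelled by themselves). -/
def IsRootedPseudoNetwork (D : V → V → Prop) (ρ : V) (X : Set V) : Prop :=
  Acyclic D ∧ (∀ v, ¬ D v v) ∧
  inDeg D ρ = 0 ∧ 1 ≤ outDeg D ρ ∧
  (∀ v, inDeg D v = 0 → v = ρ) ∧
  (∀ v, outDeg D v = 0 → inDeg D v = 1) ∧
  {v | outDeg D v = 0} = X ∧
  (∀ v, v ≠ ρ → outDeg D v ≠ 0 → 1 ≤ inDeg D v ∧ 1 ≤ outDeg D v)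

/-- `D` is a rooted phylogenetic network with root `ρ` and leaf set `X`:
additionally every internal vertex has in-degree 1 and out-degree ≥ 2, or
in-degree ≥ 2 and out-degree ≥ 1. -/
def IsRootedPhyloNetwork (D : V → V → Prop) (ρ : V) (X : Set V) : Prop :=
  Acyclic D ∧ (∀ v, ¬ D v v) ∧
  inDeg D ρ = 0 ∧ 1 ≤ outDeg D ρ ∧
  (∀ v, inDeg D v = 0 → v = ρ) ∧
  (∀ v, outDeg D v = 0 → inDeg D v = 1) ∧
  {v | outDeg D v = 0} = X ∧
  (∀ v, v ≠ ρ → outDeg D v ≠ 0 →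
    (inDeg D v = 1 ∧ 2 ≤ outDeg D v) ∨ (2 ≤ inDeg D v ∧ 1 ≤ outDeg D v))

/-- `{u,w} = {a,b}` as unordered pairs. -/
def SamePair (u w a b : V) : Prop := (u = a ∧ w = b) ∨ (u = b ∧ w = a)

/-- A Variant-A orientation of the undirected graph `adj` obtained by
subdividing the edge `{a,b}` with a new root vertex `none` and directing all
edges; `D` is the resulting arc relation on `Option V` (the root is `none`). -/
def VariantA (adj : V → V → Prop) (a b : V) (D : Option V → Option V → Prop) : Prop :=
  adj a b ∧
  D none (some a) ∧ D none (some b) ∧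
  (∀ o, ¬ D o none) ∧
  (∀ u, D none (some u) → u = a ∨ u = b) ∧
  (∀ u w : V, D (some u) (some w) → adj u w ∧ ¬ SamePair u w a b) ∧
  (∀ u w : V, adj u w → ¬ SamePair u w a b → (D (some u) (some w) ↔ ¬ D (some w) (some u)))

/-- `D` assigns to each edge of `adj` exactly one direction (used for
Variant-B orientations and for orientations of connector networks). -/
def IsOrientation (adj D : V → V → Prop) : Prop :=
  (∀ a b, D a b → adj a b) ∧ (∀ a b, adj a b → (D a b ↔ ¬ D b a))

/-- An orientation of a connector network with labelled leaves `L` and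
connector leaves `Uc` that is acyclic, in which every labelled leaf has
out-degree 0 and every vertex not in `L ∪ Uc` has in-degree ≥ 1 and
out-degree ≥ 1 (the standing hypotheses for the compatibility notions). -/
def GoodOrientation (adj D : V → V → Prop) (L Uc : Set V) : Prop :=
  IsOrientation adj D ∧ Acyclic D ∧ (∀ v ∈ L, outDeg D v = 0) ∧
  (∀ v, v ∉ L ∪ Uc → 1 ≤ inDeg D v ∧ 1 ≤ outDeg D v)

/-- F-compatible: every vertex of in-degree at least 2 has out-degree 1. -/
def FCompatible (D : V → V → Prop) : Prop := ∀ v, 2 ≤ inDeg D v → outDeg D v = 1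

/-- TC-compatible orientation of a connector network. -/
def TCCompatible (D : V → V → Prop) (L Uc : Set V) : Prop :=
  ∀ v, v ∉ L ∪ Uc → ∃ u, D v u ∧ (u ∈ L ∪ Uc ∨ (inDeg D u = 1 ∧ 1 ≤ outDeg D u))

/-- Strongly TC-compatible orientation of a connector network. -/
def StrongTCCompatible (D : V → V → Prop) (L Uc : Set V) : Prop :=
  ∀ v, v ∉ L ∪ Uc → ∃ u, D v u ∧ (u ∈ L ∨ (inDeg D u = 1 ∧ 1 ≤ outDeg D u))

end Prelude

namespace PaperFormalization

/-- Vertices of the root gadget: connector leaf `r`, internal vertices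
`v,w,x,y,z`, and labelled leaves `lf, lf'`. -/
inductive RGV : Type
  | r | v | w | x | y | z | lf | lf'

/-- The edges of the root gadget (one fixed orientation of each edge). -/
def rgBase : RGV → RGV → Prop
  | .r, .v => True
  | .v, .w => True
  | .v, .x => True
  | .w, .x => True
  | .w, .y => True
  | .x, .z => True
  | .y, .z => True
  | .y, .lf => True
  | .z, .lf' => True
  | _, _ => False

/-- Adjacency relation of the root gadget. -/
def rgAdj (a b : RGV) : Prop := rgBase a b ∨ rgBase b a

/-- Leaf set of the partner network of the root gadget (the connector leaf `r`
is regarded as a labelled leaf). -/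
def rgLeaves : Set RGV := {RGV.r, RGV.lf, RGV.lf'}

end PaperFormalization


namespace PaperFormalization

def RGV.toFin : RGV → Fin 8
  | .r => 0
  | .v => 1
  | .w => 2
  | .x => 3
  | .y => 4
  | .z => 5
  | .lf => 6
  | .lf' => 7

lemma RGV.toFin_injective : Function.Injective RGV.toFin := by
  intro a b h
  cases a <;> cases b <;> simp [RGV.toFin] at h ⊢

instance : DecidableEq RGV := fun a b => decidable_of_iff _ RGV.toFin_injective.eq_iff

instance : Finite RGV := Finite.of_injective _ RGV.toFin_injective

section Helpers

universe u
variable {V : Type u} [Finite V] {D : V → V → Prop}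

lemma outDeg_ne_zero_of_arc {v u : V} (h : D v u) : outDeg D v ≠ 0 := by
  intro h0
  rw [outDeg, Set.ncard_eq_zero (Set.toFinite _)] at h0
  have : u ∈ {w | D v w} := h
  rw [h0] at this
  exact this

lemma not_arc_of_outDeg_zero {v : V} (h : outDeg D v = 0) : ∀ u, ¬ D v u :=
  fun _ hu => outDeg_ne_zero_of_arc hu h

lemma outDeg_eq_zero {v : V} (h : ∀ u, ¬ D v u) : outDeg D v = 0 := by
  rw [outDeg, Set.ncard_eq_zero (Set.toFinite _)]
  ext u
  simp [h u]

lemma two_le_inDeg {a b v : V} (ha : D a v) (hb : D b v) (hab : a ≠ b) :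
    2 ≤ inDeg D v := by
  have : 1 < Set.ncard {u | D u v} :=
    (Set.one_lt_ncard (Set.toFinite _)).mpr ⟨a, ha, b, hb, hab⟩
  exact this

end Helpers

end PaperFormalization

namespace PaperFormalization

/-- Lemma `root_gadget`(ii): the root gadget is
`C_A`-root-forcing for `C` the class of tree-child rooted pseudo networks:
no `C_A`-orientation of it subdivides the edge `{r,v}` incident with the
connector leaf `r` with the new root vertex. -/
theorem root_gadget_is_CA_root_forcing :
    ¬ ∃ D : Option RGV → Option RGV → Prop,
        VariantA rgAdj RGV.r RGV.v D ∧
        IsRootedPseudoNetwork D none (Option.some '' rgLeaves) ∧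
        TreeChild D := by
  rintro ⟨D, hVA, hNet, hTC⟩
  obtain ⟨hadj_rv, hDr, hDv, hNone, hRootOut, hArc, hOrient⟩ := hVA
  obtain ⟨hAcy, hIrr, hInRoot, hOutRoot, hRootUnique, hLeafIn, hLeafSet, hInternal⟩ := hNet
  -- non-pair facts
  have nsp : ∀ a b : RGV, a ≠ .r → b ≠ .r → ¬ SamePair a b .r .v := by
    rintro a b h1 h2 (⟨hh, -⟩ | ⟨-, hh⟩)
    · exact h1 hh
    · exact h2 hh
  have hone : ∀ a b : RGV, rgAdj a b → ¬ SamePair a b .r .v →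
      D (some a) (some b) → ¬ D (some b) (some a) :=
    fun a b hadj hsp h => (hOrient a b hadj hsp).mp h
  have hflip : ∀ a b : RGV, rgAdj a b → ¬ SamePair a b .r .v →
      ¬ D (some a) (some b) → D (some b) (some a) := by
    intro a b hadj hsp h
    by_contra h2
    exact h ((hOrient a b hadj hsp).mpr h2)
  -- internal vertices are not leaves
  have hNL : ∀ t : RGV, t ≠ .r → t ≠ .lf → t ≠ .lf' → outDeg D (some t) ≠ 0 := by
    intro t h1 h2 h3 h0
    have hm : (some t) ∈ {v | outDeg D v = 0} := h0
    rw [hLeafSet] at hm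
    obtain ⟨a, ha, hae⟩ := hm
    simp only [rgLeaves, Set.mem_insert_iff, Set.mem_singleton_iff] at ha
    obtain rfl : a = t := by injection hae
    rcases ha with rfl | rfl | rfl
    · exact h1 rfl
    · exact h2 rfl
    · exact h3 rfl
  -- labelled leaves have no out-arcs
  have hlf0 : outDeg D (some RGV.lf) = 0 := by
    have := Set.ext_iff.mp hLeafSet (some RGV.lf)
    exact this.mpr ⟨RGV.lf, by simp [rgLeaves], rfl⟩
  have hlf'0 : outDeg D (some RGV.lf') = 0 := by
    have := Set.ext_iff.mp hLeafSet (some RGV.lf')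
    exact this.mpr ⟨RGV.lf', by simp [rgLeaves], rfl⟩
  have hylf : D (some RGV.y) (some RGV.lf) :=
    hflip .lf .y (Or.inr trivial) (nsp _ _ nofun nofun) (not_arc_of_outDeg_zero hlf0 _)
  have hzlf : D (some RGV.z) (some RGV.lf') :=
    hflip .lf' .z (Or.inr trivial) (nsp _ _ nofun nofun) (not_arc_of_outDeg_zero hlf'0 _)
  -- children enumerations
  have hch_v : ∀ u, D (some RGV.v) u → u = some RGV.w ∨ u = some RGV.x := by
    intro u h
    cases u with
    | none => exact absurd h (hNone _)
    | some b =>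
      obtain ⟨hadj, hsp⟩ := hArc _ _ h
      cases b with
      | r => exact absurd (Or.inr ⟨rfl, rfl⟩) hsp
      | w => exact Or.inl rfl
      | x => exact Or.inr rfl
      | v | y | z | lf | lf' => rcases hadj with hh | hh <;> exact ((hh : False)).elim
  have hch_w : ∀ u, D (some RGV.w) u →
      u = some RGV.v ∨ u = some RGV.x ∨ u = some RGV.y := by
    intro u h
    cases u with
    | none => exact absurd h (hNone _)
    | some b =>
      obtain ⟨hadj, hsp⟩ := hArc _ _ h
      cases b with
      | v => exact Or.inl rfl
      | x => exact Or.inr (Or.inl rfl)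
      | y => exact Or.inr (Or.inr rfl)
      | r | w | z | lf | lf' => rcases hadj with hh | hh <;> exact ((hh : False)).elim
  have hch_x : ∀ u, D (some RGV.x) u →
      u = some RGV.v ∨ u = some RGV.w ∨ u = some RGV.z := by
    intro u h
    cases u with
    | none => exact absurd h (hNone _)
    | some b =>
      obtain ⟨hadj, hsp⟩ := hArc _ _ h
      cases b with
      | v => exact Or.inl rfl
      | w => exact Or.inr (Or.inl rfl)
      | z => exact Or.inr (Or.inr rfl)
      | r | x | y | lf | lf' => rcases hadj with hh | hh <;> exact ((hh : False)).elim
  -- main case analysis on the triangle v,w,x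
  by_cases hvw : D (some RGV.v) (some RGV.w) <;> by_cases hvx : D (some RGV.v) (some RGV.x)
  · -- v→w and v→x
    have hnwv : ¬ D (some RGV.w) (some RGV.v) := hone .v .w (Or.inl trivial) (nsp _ _ nofun nofun) hvw
    have hnxv : ¬ D (some RGV.x) (some RGV.v) := hone .v .x (Or.inl trivial) (nsp _ _ nofun nofun) hvx
    by_cases hwx : D (some RGV.w) (some RGV.x)
    · -- w→x
      have hnxw : ¬ D (some RGV.x) (some RGV.w) := hone .w .x (Or.inl trivial) (nsp _ _ nofun nofun) hwx
      by_cases hwy : D (some RGV.w) (some RGV.y)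
      · by_cases hzy : D (some RGV.z) (some RGV.y)
        · -- w fails the tree-child condition
          obtain ⟨u, hwu, hor⟩ := hTC _ (hNL .w nofun nofun nofun)
          rcases hch_w u hwu with rfl | rfl | rfl
          · exact hnwv hwu
          · rcases hor with ⟨h1, -⟩ | h0
            · have h2 : 2 ≤ inDeg D (some RGV.x) := two_le_inDeg hvx hwx (by decide)
              omega
            · exact hNL .x nofun nofun nofun h0
          · rcases hor with ⟨h1, -⟩ | h0
            · have h2 : 2 ≤ inDeg D (some RGV.y) := two_le_inDeg hwy hzy (by decide)
              omega
            · exact outDeg_ne_zero_of_arc hylf h0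
        · have hyz : D (some RGV.y) (some RGV.z) :=
            hflip .z .y (Or.inr trivial) (nsp _ _ nofun nofun) hzy
          by_cases hxz : D (some RGV.x) (some RGV.z)
          · -- x fails the tree-child condition
            obtain ⟨u, hxu, hor⟩ := hTC _ (hNL .x nofun nofun nofun)
            rcases hch_x u hxu with rfl | rfl | rfl
            · exact hnxv hxu
            · exact hnxw hxu
            · rcases hor with ⟨h1, -⟩ | h0
              · have h2 : 2 ≤ inDeg D (some RGV.z) := two_le_inDeg hxz hyz (by decide)
                omega
              · exact outDeg_ne_zero_of_arc hzlf h0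
          · -- x would be a leaf
            exact hNL .x nofun nofun nofun (outDeg_eq_zero fun u hu => by
              rcases hch_x u hu with rfl | rfl | rfl
              exacts [hnxv hu, hnxw hu, hxz hu])
      · -- y→w, so v fails the tree-child condition
        have hyw : D (some RGV.y) (some RGV.w) :=
          hflip .w .y (Or.inl trivial) (nsp _ _ nofun nofun) hwy
        obtain ⟨u, hvu, hor⟩ := hTC _ (hNL .v nofun nofun nofun)
        rcases hch_v u hvu with rfl | rfl
        · rcases hor with ⟨h1, -⟩ | h0
          · have h2 : 2 ≤ inDeg D (some RGV.w) := two_le_inDeg hvw hyw (by decide)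
            omega
          · exact hNL .w nofun nofun nofun h0
        · rcases hor with ⟨h1, -⟩ | h0
          · have h2 : 2 ≤ inDeg D (some RGV.x) := two_le_inDeg hvx hwx (by decide)
            omega
          · exact hNL .x nofun nofun nofun h0
    · -- x→w
      have hxw : D (some RGV.x) (some RGV.w) :=
        hflip .w .x (Or.inl trivial) (nsp _ _ nofun nofun) hwx
      by_cases hzx : D (some RGV.z) (some RGV.x)
      · -- v fails the tree-child condition
        obtain ⟨u, hvu, hor⟩ := hTC _ (hNL .v nofun nofun nofun)
        rcases hch_v u hvu with rfl | rfl
        · rcases hor with ⟨h1, -⟩ | h0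
          · have h2 : 2 ≤ inDeg D (some RGV.w) := two_le_inDeg hvw hxw (by decide)
            omega
          · exact hNL .w nofun nofun nofun h0
        · rcases hor with ⟨h1, -⟩ | h0
          · have h2 : 2 ≤ inDeg D (some RGV.x) := two_le_inDeg hvx hzx (by decide)
            omega
          · exact hNL .x nofun nofun nofun h0
      · have hxz : D (some RGV.x) (some RGV.z) :=
          hflip .z .x (Or.inr trivial) (nsp _ _ nofun nofun) hzx
        by_cases hyz : D (some RGV.y) (some RGV.z)
        · -- x fails the tree-child condition
          obtain ⟨u, hxu, hor⟩ := hTC _ (hNL .x nofun nofun nofun)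
          rcases hch_x u hxu with rfl | rfl | rfl
          · exact hnxv hxu
          · rcases hor with ⟨h1, -⟩ | h0
            · have h2 : 2 ≤ inDeg D (some RGV.w) := two_le_inDeg hvw hxw (by decide)
              omega
            · exact hNL .w nofun nofun nofun h0
          · rcases hor with ⟨h1, -⟩ | h0
            · have h2 : 2 ≤ inDeg D (some RGV.z) := two_le_inDeg hxz hyz (by decide)
              omega
            · exact outDeg_ne_zero_of_arc hzlf h0
        · have hzy : D (some RGV.z) (some RGV.y) :=
            hflip .y .z (Or.inl trivial) (nsp _ _ nofun nofun) hyz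
          by_cases hwy : D (some RGV.w) (some RGV.y)
          · -- w fails the tree-child condition
            obtain ⟨u, hwu, hor⟩ := hTC _ (hNL .w nofun nofun nofun)
            rcases hch_w u hwu with rfl | rfl | rfl
            · exact hnwv hwu
            · exact hwx hwu
            · rcases hor with ⟨h1, -⟩ | h0
              · have h2 : 2 ≤ inDeg D (some RGV.y) := two_le_inDeg hwy hzy (by decide)
                omega
              · exact outDeg_ne_zero_of_arc hylf h0
          · -- w would be a leaf
            exact hNL .w nofun nofun nofun (outDeg_eq_zero fun u hu => by
              rcases hch_w u hu with rfl | rfl | rfl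
              exacts [hnwv hu, hwx hu, hwy hu])
  · -- v→w, x→v
    have hxv : D (some RGV.x) (some RGV.v) :=
      hflip .v .x (Or.inl trivial) (nsp _ _ nofun nofun) hvx
    by_cases hwx : D (some RGV.w) (some RGV.x)
    · exact hAcy _ (Relation.TransGen.head hwx (Relation.TransGen.head hxv
        (Relation.TransGen.single hvw)))
    · have hxw : D (some RGV.x) (some RGV.w) :=
        hflip .w .x (Or.inl trivial) (nsp _ _ nofun nofun) hwx
      obtain ⟨u, hvu, hor⟩ := hTC _ (hNL .v nofun nofun nofun)
      rcases hch_v u hvu with rfl | rfl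
      · rcases hor with ⟨h1, -⟩ | h0
        · have h2 : 2 ≤ inDeg D (some RGV.w) := two_le_inDeg hvw hxw (by decide)
          omega
        · exact hNL .w nofun nofun nofun h0
      · exact hvx hvu
  · -- w→v, v→x
    have hwv : D (some RGV.w) (some RGV.v) :=
      hflip .v .w (Or.inl trivial) (nsp _ _ nofun nofun) hvw
    by_cases hwx : D (some RGV.w) (some RGV.x)
    · -- v fails the tree-child condition
      obtain ⟨u, hvu, hor⟩ := hTC _ (hNL .v nofun nofun nofun)
      rcases hch_v u hvu with rfl | rfl
      · exact hvw hvu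
      · rcases hor with ⟨h1, -⟩ | h0
        · have h2 : 2 ≤ inDeg D (some RGV.x) := two_le_inDeg hvx hwx (by decide)
          omega
        · exact hNL .x nofun nofun nofun h0
    · have hxw : D (some RGV.x) (some RGV.w) :=
        hflip .w .x (Or.inl trivial) (nsp _ _ nofun nofun) hwx
      exact hAcy _ (Relation.TransGen.head hxw (Relation.TransGen.head hwv
        (Relation.TransGen.single hvx)))
  · -- v would be a leaf
    exact hNL .v nofun nofun nofun (outDeg_eq_zero fun u hu => by
      rcases hch_v u hu with rfl | rfl
      exacts [hvw hu, hvx hu])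

end PaperFormalization
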